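/- For λ ∈ (0,1) and α > 0, the function C₀(t,λ) = (Γ((1-λ)αt)/Γ(αt))·(αt/e)^{λαt}·(1-λ)^{-(1-λ)αt} satisfies lim_{t→0⁺} C₀(t,λ) = 1/(1-λ) and lim_{t→∞} C₀(t,λ) = 1/√(1-λ). Consequently, 1/√(1-λ) ≤ C₀(t,λ) ≤ 1/(1-λ) for all t > 0. -/

import Mathlib

open Real Set Filter

-- generic helper: F 0 = 0, F has nonneg deriv on [0,∞) ⇒ F u ≥ 0
-- prove log ineqs directly

lemma log_ineq_trap {u : ℝ} (hu : 0 < u) :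
    Real.log (1 + u) ≤ u/2 + u/(2*(1+u)) := by
  have h1 : ∀ x ∈ Set.Ici (0:ℝ), HasDerivAt (fun u => u/2 + u/(2*(1+u)) - Real.log (1+u))
      (x^2/(2*(1+x)^2)) x := by
    intro x hx
    have hx0 : (0:ℝ) ≤ x := hx
    have h1x : (0:ℝ) < 1 + x := by linarith
    have d1 : HasDerivAt (fun u : ℝ => u/(2*(1+u))) ((2*(1+x) - x*2)/(2*(1+x))^2) x := by
      have := (hasDerivAt_id x).fun_div ((hasDerivAt_id x).const_add (1:ℝ) |>.const_mul 2) (by positivity)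
      simpa using this
    have d2 : HasDerivAt (fun u : ℝ => Real.log (1+u)) (1/(1+x)) x := by
      have := ((hasDerivAt_id x).const_add (1:ℝ)).log h1x.ne'
      simpa using this
    have := ((hasDerivAt_id x).div_const 2 |>.fun_add d1).fun_sub d2
    refine this.congr_deriv ?_
    field_simp
    ring
  have key : MonotoneOn (fun u => u/2 + u/(2*(1+u)) - Real.log (1+u)) (Set.Ici (0:ℝ)) := by
    apply monotoneOn_of_deriv_nonneg (convex_Ici 0)
    · exact fun x hx => (h1 x hx).continuousAt.continuousWithinAt
    · intro x hx
      rw [interior_Ici] at hx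
      exact ((h1 x (mem_Ici.mpr (mem_Ioi.mp hx).le)).differentiableAt).differentiableWithinAt
    · intro x hx
      rw [interior_Ici] at hx
      rw [(h1 x (mem_Ici.mpr (mem_Ioi.mp hx).le)).deriv]
      positivity
  have h0 := key (self_mem_Ici) (le_of_lt hu : (0:ℝ) ≤ u) hu.le
  simp at h0
  linarith

lemma log_ineq_mid {u : ℝ} (hu : 0 < u) :
    2*u/(2+u) ≤ Real.log (1 + u) := by
  have h1 : ∀ x ∈ Set.Ici (0:ℝ), HasDerivAt (fun u => Real.log (1+u) - 2*u/(2+u))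
      (x^2/((1+x)*(2+x)^2)) x := by
    intro x hx
    have hx0 : (0:ℝ) ≤ x := hx
    have h1x : (0:ℝ) < 1 + x := by linarith
    have h2x : (0:ℝ) < 2 + x := by linarith
    have d2 : HasDerivAt (fun u : ℝ => Real.log (1+u)) (1/(1+x)) x := by
      have := ((hasDerivAt_id x).const_add (1:ℝ)).log h1x.ne'
      simpa using this
    have d1 : HasDerivAt (fun u : ℝ => 2*u/(2+u)) ((2*(2+x) - 2*x*1)/(2+x)^2) x := by
      have := ((hasDerivAt_id x).const_mul (2:ℝ)).fun_div ((hasDerivAt_id x).const_add (2:ℝ)) h2x.ne'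
      simpa using this
    have := d2.fun_sub d1
    refine this.congr_deriv ?_
    field_simp
    ring
  have key : MonotoneOn (fun u => Real.log (1+u) - 2*u/(2+u)) (Set.Ici (0:ℝ)) := by
    apply monotoneOn_of_deriv_nonneg (convex_Ici 0)
    · exact fun x hx => (h1 x hx).continuousAt.continuousWithinAt
    · intro x hx
      rw [interior_Ici] at hx
      exact ((h1 x (mem_Ici.mpr (mem_Ioi.mp hx).le)).differentiableAt).differentiableWithinAt
    · intro x hx
      rw [interior_Ici] at hx
      rw [(h1 x (mem_Ici.mpr (mem_Ioi.mp hx).le)).deriv]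
      have hx0 : (0:ℝ) < x := hx
      have h1x : (0:ℝ) < 1 + x := by linarith
      have h2x : (0:ℝ) < 2 + x := by linarith
      positivity
  have h0 := key (self_mem_Ici) (le_of_lt hu : (0:ℝ) ≤ u) hu.le
  simp at h0
  linarith

-- log(1+u) ≥ u/(1+u)
lemma log_ineq_low {u : ℝ} (hu : 0 < u) : u/(1+u) ≤ Real.log (1+u) := by
  have h1x : (0:ℝ) < 1 + u := by linarith
  have := Real.log_le_sub_one_of_pos (show (0:ℝ) < (1+u)⁻¹ by positivity)
  rw [Real.log_inv] at this
  have h2 : (1+u)⁻¹ - 1 = -(u/(1+u)) := by field_simp; ring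
  rw [h2] at this
  linarith

lemma log_ineq_up {u : ℝ} (hu : 0 < u) : Real.log (1+u) ≤ u := by
  have := Real.log_le_sub_one_of_pos (show (0:ℝ) < 1+u by linarith)
  linarith

noncomputable def bg (y : ℝ) : ℝ := (y + 1/2) * Real.log ((y+1)/y) - 1
noncomputable def bg' (y : ℝ) : ℝ := Real.log ((y+1)/y) - (1/(2*y) + 1/(2*(y+1)))
noncomputable def bG (y : ℝ) : ℝ := y * Real.log ((y+1)/y) - 1

lemma log_ratio {y : ℝ} (hy : 0 < y) : Real.log ((y+1)/y) = Real.log (1 + 1/y) := by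
  congr 1; field_simp

lemma hasDerivAt_log_ratio {y : ℝ} (hy : 0 < y) :
    HasDerivAt (fun y => Real.log ((y+1)/y)) (1/(y+1) - 1/y) y := by
  have h1 : (0:ℝ) < y + 1 := by linarith
  have d : HasDerivAt (fun y : ℝ => Real.log (y+1) - Real.log y) (1/(y+1) - 1/y) y := by
    have d1 : HasDerivAt (fun y : ℝ => Real.log (y+1)) (1/(y+1)) y := by
      have := ((hasDerivAt_id y).add_const (1:ℝ)).log h1.ne'
      simpa using this
    have d2 := Real.hasDerivAt_log hy.ne'
    simpa [one_div] using d1.fun_sub d2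
  apply d.congr_of_eventuallyEq
  filter_upwards [eventually_gt_nhds hy] with z hz
  rw [Real.log_div (by linarith) hz.ne']

lemma hasDerivAt_bg {y : ℝ} (hy : 0 < y) : HasDerivAt bg (bg' y) y := by
  have h1 : (0:ℝ) < y + 1 := by linarith
  have d := ((hasDerivAt_id y).add_const (1/2:ℝ)).fun_mul (hasDerivAt_log_ratio hy)
  have := d.sub_const 1
  refine this.congr_deriv ?_
  unfold bg'
  simp only [id]
  field_simp
  ring

lemma hasDerivAt_bg' {y : ℝ} (hy : 0 < y) :
    HasDerivAt bg' ((1/y - 1/(y+1))^2/2) y := by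
  have h1 : (0:ℝ) < y + 1 := by linarith
  have d1 : HasDerivAt (fun y : ℝ => 1/(2*y) + 1/(2*(y+1)))
      (-(2)/(2*y)^2 + (-(2)/(2*(y+1))^2)) y := by
    have a1 : HasDerivAt (fun y : ℝ => 2*y) 2 y := by
      simpa using (hasDerivAt_id y).const_mul (2:ℝ)
    have a2 : HasDerivAt (fun y : ℝ => 2*(y+1)) 2 y := by
      simpa using (((hasDerivAt_id y).add_const (1:ℝ)).const_mul (2:ℝ))
    have b1 := a1.fun_inv (by positivity)
    have b2 := a2.fun_inv (by positivity)
    have := b1.fun_add b2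
    simp only [one_div]
    convert this using 1
  have := (hasDerivAt_log_ratio hy).fun_sub d1
  refine this.congr_deriv ?_
  field_simp
  ring

lemma bg_nonneg {y : ℝ} (hy : 0 < y) : 0 ≤ bg y := by
  have h1 : (0:ℝ) < y + 1 := by linarith
  have hu : (0:ℝ) < 1/y := by positivity
  have := log_ineq_mid hu
  rw [bg, log_ratio hy]
  have e : 2*(1/y)/(2+1/y) = 2/(2*y+1) := by
    rw [div_eq_div_iff (by positivity) (by positivity)]
    field_simp
  rw [e] at this
  have : (y+1/2) * (2/(2*y+1)) ≤ (y+1/2) * Real.log (1+1/y) :=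
    mul_le_mul_of_nonneg_left this (by linarith)
  have e2 : (y+1/2) * (2/(2*y+1)) = 1 := by field_simp
  linarith

lemma bg_le {y : ℝ} (hy : 0 < y) : bg y ≤ 1/(4*y*(y+1)) := by
  have h1 : (0:ℝ) < y + 1 := by linarith
  have hu : (0:ℝ) < 1/y := by positivity
  have := log_ineq_trap hu
  rw [bg, log_ratio hy]
  have e : (1/y)/2 + (1/y)/(2*(1+1/y)) = 1/(2*y) + 1/(2*(y+1)) := by
    have : 1 + 1/y = (y+1)/y := by field_simp
    rw [this]
    field_simp
  rw [e] at this
  have h2 : (y+1/2) * Real.log (1+1/y) ≤ (y+1/2) * (1/(2*y) + 1/(2*(y+1))) :=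
    mul_le_mul_of_nonneg_left this (by linarith)
  have e2 : (y+1/2) * (1/(2*y) + 1/(2*(y+1))) = 1 + 1/(4*y*(y+1)) := by
    field_simp; ring
  linarith

lemma bg'_nonpos {y : ℝ} (hy : 0 < y) : bg' y ≤ 0 := by
  have h1 : (0:ℝ) < y + 1 := by linarith
  have hu : (0:ℝ) < 1/y := by positivity
  have := log_ineq_trap hu
  rw [bg', log_ratio hy]
  have e : (1/y)/2 + (1/y)/(2*(1+1/y)) = 1/(2*y) + 1/(2*(y+1)) := by
    have : 1 + 1/y = (y+1)/y := by field_simp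
    rw [this]
    field_simp
  rw [e] at this
  linarith

lemma bg_antitone : AntitoneOn bg (Ioi (0:ℝ)) := by
  apply antitoneOn_of_deriv_nonpos (convex_Ioi 0)
  · exact fun x hx => (hasDerivAt_bg hx).continuousAt.continuousWithinAt
  · intro x hx
    rw [interior_Ioi] at hx
    exact (hasDerivAt_bg hx).differentiableAt.differentiableWithinAt
  · intro x hx
    rw [interior_Ioi] at hx
    rw [(hasDerivAt_bg hx).deriv]
    exact bg'_nonpos hx

lemma bg_convex : ConvexOn ℝ (Ioi (0:ℝ)) bg := by
  have hd : ∀ x ∈ Ioi (0:ℝ), deriv bg x = bg' x :=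
    fun x hx => (hasDerivAt_bg hx).deriv
  apply convexOn_of_deriv2_nonneg (convex_Ioi 0)
  · exact fun x hx => (hasDerivAt_bg hx).continuousAt.continuousWithinAt
  · intro x hx
    rw [interior_Ioi] at hx
    exact (hasDerivAt_bg hx).differentiableAt.differentiableWithinAt
  · intro x hx
    rw [interior_Ioi] at hx
    have : deriv bg =ᶠ[nhds x] bg' := by
      filter_upwards [eventually_gt_nhds hx] with z hz using hd z hz
    exact (this.differentiableAt_iff.mpr (hasDerivAt_bg' hx).differentiableAt).differentiableWithinAt
  · intro x hx
    rw [interior_Ioi] at hx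
    have : deriv bg =ᶠ[nhds x] bg' := by
      filter_upwards [eventually_gt_nhds hx] with z hz using hd z hz
    show 0 ≤ deriv (deriv bg) x
    rw [this.deriv_eq, (hasDerivAt_bg' hx).deriv]
    positivity

lemma bG_monotone : MonotoneOn bG (Ioi (0:ℝ)) := by
  have hd : ∀ x ∈ Ioi (0:ℝ), HasDerivAt bG (Real.log ((x+1)/x) - 1/(x+1)) x := by
    intro x hx
    have hx0 : (0:ℝ) < x := hx
    have h1 : (0:ℝ) < x + 1 := by linarith
    have d := (hasDerivAt_id x).fun_mul (hasDerivAt_log_ratio hx0)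
    have := d.sub_const 1
    refine this.congr_deriv ?_
    simp only [id]
    field_simp
    ring
  apply monotoneOn_of_deriv_nonneg (convex_Ioi 0)
  · exact fun x hx => (hd x hx).continuousAt.continuousWithinAt
  · intro x hx
    rw [interior_Ioi] at hx
    exact (hd x hx).differentiableAt.differentiableWithinAt
  · intro x hx
    rw [interior_Ioi] at hx
    rw [(hd x hx).deriv]
    have hx0 : (0:ℝ) < x := hx
    have h1 : (0:ℝ) < x + 1 := by linarith
    have hu : (0:ℝ) < 1/x := by positivity
    have := log_ineq_low hu
    rw [log_ratio hx0]
    have e : (1/x)/(1+1/x) = 1/(x+1) := by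
      rw [div_eq_div_iff (by positivity) (by positivity)]
      field_simp
    rw [e] at this
    linarith

lemma bG_nonpos {y : ℝ} (hy : 0 < y) : bG y ≤ 0 := by
  have h1 : (0:ℝ) < y + 1 := by linarith
  have hu : (0:ℝ) < 1/y := by positivity
  have := log_ineq_up hu
  rw [bG, log_ratio hy]
  have h2 : y * Real.log (1+1/y) ≤ y * (1/y) := mul_le_mul_of_nonneg_left this hy.le
  rw [mul_one_div, div_self hy.ne'] at h2
  linarith

noncomputable def bmu (x : ℝ) : ℝ := ∑' n : ℕ, bg (x + n)

lemma bg_sum_le {x : ℝ} (hx : 0 < x) (N : ℕ) :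
    ∑ n ∈ Finset.range N, bg (x + n) ≤ 1/(4*x) := by
  set f : ℕ → ℝ := fun n => 1/(4*(x+n)) with hf
  have key : ∀ n ∈ Finset.range N, bg (x + n) ≤ f n - f (n+1) := by
    intro n _
    have hxn : (0:ℝ) < x + n := by positivity
    have h := bg_le hxn
    have e : f n - f (n+1) = 1/(4*(x+n)*((x+n)+1)) := by
      simp only [hf]
      push_cast
      rw [div_sub_div _ _ (by positivity) (by positivity), div_eq_div_iff (by positivity) (by positivity)]
      ring
    rw [e]
    exact h
  calc ∑ n ∈ Finset.range N, bg (x + n)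
      ≤ ∑ n ∈ Finset.range N, (f n - f (n+1)) := Finset.sum_le_sum key
    _ = f 0 - f N := Finset.sum_range_sub' f N
    _ ≤ 1/(4*x) := by
        have h1 : (0:ℝ) < x + N := by positivity
        have h2 : 0 ≤ f N := by simp only [hf]; positivity
        have h3 : f 0 = 1/(4*x) := by simp [hf]
        linarith

lemma bmu_summable {x : ℝ} (hx : 0 < x) : Summable (fun n : ℕ => bg (x + n)) := by
  apply summable_of_sum_range_le (c := 1/(4*x))
  · intro n; exact bg_nonneg (by positivity)
  · exact bg_sum_le hx

lemma bmu_nonneg {x : ℝ} (hx : 0 < x) : 0 ≤ bmu x :=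
  tsum_nonneg (fun n => bg_nonneg (by positivity))

lemma bmu_le {x : ℝ} (hx : 0 < x) : bmu x ≤ 1/(4*x) :=
  tsum_le_of_sum_range_le (fun n => bg_nonneg (by positivity)) (bg_sum_le hx)

lemma bmu_anti {u s : ℝ} (hu : 0 < u) (hus : u ≤ s) : bmu s ≤ bmu u := by
  have hs : 0 < s := lt_of_lt_of_le hu hus
  have key : ∀ n : ℕ, bg (s + n) ≤ bg (u + n) := by
    intro n
    have h1 : (0:ℝ) < u + n := by positivity
    have h2 : (0:ℝ) < s + n := by positivity
    exact bg_antitone (mem_Ioi.mpr h1) (mem_Ioi.mpr h2) (by linarith)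
  exact Summable.tsum_le_tsum key (bmu_summable (lt_of_lt_of_le hu hus)) (bmu_summable hu)

lemma bmu_rec {x : ℝ} (hx : 0 < x) : bmu x = bg x + bmu (x+1) := by
  rw [bmu, Summable.tsum_eq_zero_add (bmu_summable hx)]
  simp only [Nat.cast_zero, add_zero, Nat.cast_add, Nat.cast_one]
  congr 1
  apply tsum_congr
  intro n
  congr 1
  push_cast
  ring

lemma bmu_tendsto : Tendsto bmu atTop (nhds 0) := by
  refine tendsto_of_tendsto_of_tendsto_of_le_of_le' (g := fun _ : ℝ => (0:ℝ))
    (h := fun x : ℝ => 1/(4*x)) tendsto_const_nhds ?_ ?_ ?_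
  · have : Tendsto (fun x : ℝ => 4*x) atTop atTop :=
      Tendsto.const_mul_atTop (by norm_num) tendsto_id
    have h2 := this.inv_tendsto_atTop
    simp only [Pi.inv_def] at h2
    simpa [one_div] using h2
  · filter_upwards [eventually_gt_atTop (0:ℝ)] with x hx using bmu_nonneg hx
  · filter_upwards [eventually_gt_atTop (0:ℝ)] with x hx using bmu_le hx

lemma bmu_nu {u s : ℝ} (hu : 0 < u) (hus : u ≤ s) :
    bmu u + Real.log u / 2 ≤ bmu s + Real.log s / 2 := by
  have hs : 0 < s := lt_of_lt_of_le hu hus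
  have hsum_u := bmu_summable hu
  have hsum_s := bmu_summable hs
  have key : bmu u - bmu s ≤ (Real.log s - Real.log u)/2 := by
    rw [bmu, bmu, ← Summable.tsum_sub hsum_u hsum_s]
    apply Real.tsum_le_of_sum_range_le
    · intro n
      have h1 : (0:ℝ) < u + n := by positivity
      have h2 : (0:ℝ) < s + n := by positivity
      have := bg_antitone (mem_Ioi.mpr h1) (mem_Ioi.mpr h2) (by linarith)
      linarith
    · intro N
      -- partial sum bound
      have split : ∀ n : ℕ, bg (u+n) - bg (s+n) =
          (bG (u+n) - bG (s+n))
          + ((Real.log (u+n+1) - Real.log (u+n)) - (Real.log (s+n+1) - Real.log (s+n)))/2 := by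
        intro n
        have h1 : (0:ℝ) < u + n := by positivity
        have h2 : (0:ℝ) < s + n := by positivity
        rw [bg, bg, bG, bG, Real.log_div (by linarith) h1.ne', Real.log_div (by linarith) h2.ne']
        ring
      calc ∑ n ∈ Finset.range N, (bg (u+n) - bg (s+n))
          = ∑ n ∈ Finset.range N, (bG (u+n) - bG (s+n))
            + (∑ n ∈ Finset.range N, ((Real.log (u+n+1) - Real.log (u+n)) - (Real.log (s+n+1) - Real.log (s+n))))/2 := by
            simp only [split]
            rw [Finset.sum_add_distrib, ← Finset.sum_div]
        _ ≤ 0 + ((Real.log (u+N) - Real.log u) - (Real.log (s+N) - Real.log s))/2 := by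
            gcongr ?_ + ?_/2
            · apply Finset.sum_nonpos
              intro n _
              have h1 : (0:ℝ) < u + n := by positivity
              have h2 : (0:ℝ) < s + n := by positivity
              have := bG_monotone (mem_Ioi.mpr h1) (mem_Ioi.mpr h2) (by linarith)
              linarith
            · apply le_of_eq
              rw [Finset.sum_sub_distrib]
              congr 1
              · have h := Finset.sum_range_sub (fun n : ℕ => Real.log (u + n)) N
                simp only [Nat.cast_zero, add_zero] at h
                rw [← h]
                apply Finset.sum_congr rfl
                intro n _
                push_cast
                rw [add_assoc]
              · have h := Finset.sum_range_sub (fun n : ℕ => Real.log (s + n)) N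
                simp only [Nat.cast_zero, add_zero] at h
                rw [← h]
                apply Finset.sum_congr rfl
                intro n _
                push_cast
                rw [add_assoc]
        _ ≤ (Real.log s - Real.log u)/2 := by
            have hlog : Real.log (u+N) ≤ Real.log (s+N) :=
              Real.log_le_log (by positivity) (by linarith)
            linarith
  linarith

noncomputable def bF (x : ℝ) : ℝ := (x - 1/2) * Real.log x - x + bmu x

lemma bmu_convex : ConvexOn ℝ (Ioi (0:ℝ)) bmu := by
  constructor
  · exact convex_Ioi 0
  · intro x hx y hy a b ha hb hab
    have hx0 : (0:ℝ) < x := hx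
    have hy0 : (0:ℝ) < y := hy
    have hxy : (0:ℝ) < a • x + b • y := by
      rcases eq_or_lt_of_le ha with h | h
      · simp [← h] at hab ⊢; rw [hab]; simpa [hab] using hy0
      · have : 0 ≤ b • y := by
          simp only [smul_eq_mul]; positivity
        have : 0 < a • x := by simp only [smul_eq_mul]; positivity
        linarith
    have key : ∀ n : ℕ, bg ((a • x + b • y) + n) ≤ a * bg (x + n) + b * bg (y + n) := by
      intro n
      have e : (a • x + b • y) + n = a • (x + n) + b • (y + n) := by
        simp only [smul_eq_mul]; nlinarith [hab]
      rw [e]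
      exact bg_convex.2 (mem_Ioi.mpr (by positivity)) (mem_Ioi.mpr (by positivity)) ha hb hab
    calc bmu (a • x + b • y) = ∑' n : ℕ, bg ((a • x + b • y) + n) := rfl
      _ ≤ ∑' n : ℕ, (a * bg (x + n) + b * bg (y + n)) := by
          apply Summable.tsum_le_tsum key (bmu_summable hxy)
          exact ((bmu_summable hx0).mul_left a).add ((bmu_summable hy0).mul_left b)
      _ = a * bmu x + b * bmu y := by
          rw [Summable.tsum_add ((bmu_summable hx0).mul_left a) ((bmu_summable hy0).mul_left b),
            tsum_mul_left, tsum_mul_left]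
          rfl

lemma bF_convex : ConvexOn ℝ (Ioi (0:ℝ)) bF := by
  have h1 : ConvexOn ℝ (Ioi (0:ℝ)) (fun x : ℝ => x * Real.log x) :=
    convexOn_mul_log.subset (fun x hx => mem_Ici.mpr (mem_Ioi.mp hx).le) (convex_Ioi 0)
  have h2 : ConvexOn ℝ (Ioi (0:ℝ)) (fun x : ℝ => -(1/2) * Real.log x) := by
    have := (strictConcaveOn_log_Ioi.concaveOn).neg
    have h3 := this.smul (c := (1/2:ℝ)) (by norm_num)
    refine h3.congr fun x _ => ?_
    simp only [Pi.smul_apply, Pi.neg_apply, smul_eq_mul]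
    ring
  have h4 : ConvexOn ℝ (Ioi (0:ℝ)) (fun x : ℝ => -x) :=
    (concaveOn_id (convex_Ioi 0)).neg
  have h5 := ((h1.add h2).add h4).add bmu_convex
  have e : bF = (((fun x : ℝ => x * Real.log x) + fun x : ℝ => -(1/2) * Real.log x) + fun x : ℝ => -x) + bmu := by
    funext x
    simp only [bF, Pi.add_apply]
    ring
  rw [e]
  exact h5

lemma bF_rec {y : ℝ} (hy : 0 < y) : bF (y + 1) = Real.log y + bF y := by
  have h1 : (0:ℝ) < y + 1 := by linarith
  unfold bF
  rw [bmu_rec hy, bg]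
  rw [Real.log_div h1.ne' hy.ne']
  ring

theorem binet {x : ℝ} (hx : 0 < x) : Real.Gamma x = Real.exp (bF x - bF 1) := by
  have key : Set.EqOn (fun x => Real.exp (bF x - bF 1)) Real.Gamma (Ioi (0:ℝ)) := by
    apply Real.eq_Gamma_of_log_convex
    · have : (Real.log ∘ fun x => Real.exp (bF x - bF 1)) = fun x => bF x - bF 1 := by
        funext z
        simp [Real.log_exp]
      rw [this]
      exact bF_convex.sub (concaveOn_const (bF 1) (convex_Ioi 0))
    · intro y hy
      rw [bF_rec hy]
      have e2 : Real.log y + bF y - bF 1 = Real.log y + (bF y - bF 1) := by ring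
      rw [e2, Real.exp_add, Real.exp_log hy]
    · intro y hy
      exact Real.exp_pos _
    · simp
  exact (key (mem_Ioi.mpr hx)).symm

lemma C0_eq {l α t : ℝ} (hl : l ∈ Set.Ioo (0:ℝ) 1) (hα : 0 < α) (ht : 0 < t) :
    Real.Gamma ((1-l)*α*t)/Real.Gamma (α*t)
        * (α*t/Real.exp 1) ^ (l*α*t) * (1-l) ^ (-((1-l)*α*t))
    = Real.exp (-(Real.log (1-l))/2 + (bmu ((1-l)*(α*t)) - bmu (α*t))) := by
  obtain ⟨hl0, hl1⟩ := hl
  have h1l : 0 < 1 - l := by linarith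
  set s := α*t with hs
  have hs0 : 0 < s := by positivity
  have hu0 : 0 < (1-l)*s := by positivity
  have e1 : (1-l)*α*t = (1-l)*s := by rw [hs]; ring
  have e0 : l*α*t = l*s := by rw [hs]; ring
  have e0' : -((1-l)*α*t) = -((1-l)*s) := by rw [hs]; ring
  rw [e0', e0, e1, binet hu0, binet hs0, ← Real.exp_sub]
  have e2 : (s/Real.exp 1) ^ (l*s) = Real.exp ((Real.log s - 1) * (l*s)) := by
    rw [Real.rpow_def_of_pos (by positivity), Real.log_div hs0.ne' (Real.exp_pos 1).ne',
      Real.log_exp]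
  have e3 : (1-l) ^ (-((1-l)*s)) = Real.exp (Real.log (1-l) * (-((1-l)*s))) := by
    rw [Real.rpow_def_of_pos h1l]
  rw [e2, e3, ← Real.exp_add, ← Real.exp_add]
  congr 1
  unfold bF
  rw [Real.log_mul h1l.ne' hs0.ne']
  ring

lemma sqrt_inv_eq {l : ℝ} (h1l : 0 < 1 - l) :
    1/Real.sqrt (1-l) = Real.exp (-(Real.log (1-l))/2) := by
  rw [Real.sqrt_eq_rpow, Real.rpow_def_of_pos h1l, one_div, ← Real.exp_neg]
  congr 1
  ring

/-- For `λ ∈ (0,1)` and `α > 0`,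
`C₀(t,λ) = (Γ((1-λ)αt)/Γ(αt)) (αt/e)^{λαt} (1-λ)^{-(1-λ)αt}` satisfies
`C₀(t,λ) → 1/(1-λ)` as `t → 0⁺`, `C₀(t,λ) → 1/√(1-λ)` as `t → ∞`, and consequently
`1/√(1-λ) ≤ C₀(t,λ) ≤ 1/(1-λ)` for all `t > 0`. -/
theorem stmt12 (l α : ℝ) (hl : l ∈ Set.Ioo (0:ℝ) 1) (hα : 0 < α) :
    let C0 : ℝ → ℝ := fun t => Real.Gamma ((1-l)*α*t)/Real.Gamma (α*t)
        * (α*t/Real.exp 1) ^ (l*α*t) * (1-l) ^ (-((1-l)*α*t))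
    Filter.Tendsto C0 (nhdsWithin 0 (Set.Ioi 0)) (nhds (1/(1-l))) ∧
      Filter.Tendsto C0 Filter.atTop (nhds (1/Real.sqrt (1-l))) ∧
      ∀ t, 0 < t → 1/Real.sqrt (1-l) ≤ C0 t ∧ C0 t ≤ 1/(1-l) := by
  intro C0
  obtain ⟨hl0, hl1⟩ := hl
  have h1l : 0 < 1 - l := by linarith
  have hC0 : ∀ t : ℝ, 0 < t → C0 t
      = Real.exp (-(Real.log (1-l))/2 + (bmu ((1-l)*(α*t)) - bmu (α*t))) :=
    fun t ht => C0_eq ⟨hl0, hl1⟩ hα ht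
  refine ⟨?_, ?_, ?_⟩
  · -- limit at 0⁺
    have key : ∀ t : ℝ, 0 < t → C0 t =
        (Real.Gamma ((1-l)*(α*t)+1) / Real.Gamma (α*t+1)) * (1/(1-l))
          * Real.exp (l*(α*t)*(Real.log (α*t) - 1) - (1-l)*(α*t)*Real.log (1-l)) := by
      intro t ht
      have hs0 : 0 < α*t := by positivity
      have hu0 : 0 < (1-l)*(α*t) := by positivity
      have g1 : Real.Gamma ((1-l)*(α*t)+1) = (1-l)*(α*t) * Real.Gamma ((1-l)*(α*t)) :=
        Real.Gamma_add_one hu0.ne'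
      have g2 : Real.Gamma (α*t+1) = (α*t) * Real.Gamma (α*t) :=
        Real.Gamma_add_one hs0.ne'
      have hg1 : 0 < Real.Gamma ((1-l)*(α*t)) := Real.Gamma_pos_of_pos hu0
      have hg2 : 0 < Real.Gamma (α*t) := Real.Gamma_pos_of_pos hs0
      show Real.Gamma ((1-l)*α*t)/Real.Gamma (α*t)
        * (α*t/Real.exp 1) ^ (l*α*t) * (1-l) ^ (-((1-l)*α*t)) = _
      have e1 : (1-l)*α*t = (1-l)*(α*t) := by ring
      have e2 : (α*t/Real.exp 1) ^ (l*α*t)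
          = Real.exp ((Real.log (α*t) - 1) * (l*(α*t))) := by
        rw [show l*α*t = l*(α*t) by ring, Real.rpow_def_of_pos (by positivity),
          Real.log_div hs0.ne' (Real.exp_pos 1).ne', Real.log_exp]
      have e3 : (1-l) ^ (-((1-l)*(α*t))) = Real.exp (Real.log (1-l) * (-((1-l)*(α*t)))) := by
        rw [Real.rpow_def_of_pos h1l]
      rw [e1, e2, e3, g1, g2, mul_assoc, ← Real.exp_add]
      have eexp : (Real.log (α*t) - 1)*(l*(α*t)) + Real.log (1-l)*(-((1-l)*(α*t)))
          = l*(α*t)*(Real.log (α*t) - 1) - (1-l)*(α*t)*Real.log (1-l) := by ring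
      rw [eexp]
      have efrac : ((1-l)*(α*t)*Real.Gamma ((1-l)*(α*t)))/((α*t)*Real.Gamma (α*t)) * (1/(1-l))
          = Real.Gamma ((1-l)*(α*t))/Real.Gamma (α*t) := by
        field_simp
      rw [efrac]
    -- now the tendsto
    have ev : C0 =ᶠ[nhdsWithin (0:ℝ) (Set.Ioi 0)] fun t =>
        (Real.Gamma ((1-l)*(α*t)+1) / Real.Gamma (α*t+1)) * (1/(1-l))
          * Real.exp (l*(α*t)*(Real.log (α*t) - 1) - (1-l)*(α*t)*Real.log (1-l)) := by
      filter_upwards [self_mem_nhdsWithin] with t ht using key t ht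
    apply Tendsto.congr' ev.symm
    have hA : Tendsto (fun t : ℝ => α*t) (nhdsWithin (0:ℝ) (Set.Ioi 0)) (nhds 0) := by
      have : Tendsto (fun t : ℝ => α*t) (nhds (0:ℝ)) (nhds (α*0)) :=
        (continuous_const.mul continuous_id).tendsto 0
      simpa using this.mono_left nhdsWithin_le_nhds
    have contG : ContinuousAt Real.Gamma 1 := by
      apply (Real.differentiableAt_Gamma ?_).continuousAt
      intro m hm
      have h0 : (0:ℝ) ≤ m := Nat.cast_nonneg m
      linarith [hm]
    have hnum : Tendsto (fun t : ℝ => Real.Gamma ((1-l)*(α*t)+1))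
        (nhdsWithin (0:ℝ) (Set.Ioi 0)) (nhds 1) := by
      have harg : Tendsto (fun t : ℝ => (1-l)*(α*t)+1) (nhdsWithin (0:ℝ) (Set.Ioi 0)) (nhds 1) := by
        have := (hA.const_mul (1-l)).add_const 1
        simpa using this
      have := contG.tendsto.comp harg
      rwa [Real.Gamma_one] at this
    have hden : Tendsto (fun t : ℝ => Real.Gamma (α*t+1))
        (nhdsWithin (0:ℝ) (Set.Ioi 0)) (nhds 1) := by
      have harg : Tendsto (fun t : ℝ => α*t+1) (nhdsWithin (0:ℝ) (Set.Ioi 0)) (nhds 1) := by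
        have := hA.add_const 1
        simpa using this
      have := contG.tendsto.comp harg
      rwa [Real.Gamma_one] at this
    have hmullog : Tendsto (fun t : ℝ => (α*t)*Real.log (α*t))
        (nhdsWithin (0:ℝ) (Set.Ioi 0)) (nhds 0) := by
      have := (Real.continuous_mul_log.tendsto 0).comp hA
      simpa [Function.comp_def] using this
    have hexparg : Tendsto (fun t : ℝ => l*(α*t)*(Real.log (α*t) - 1) - (1-l)*(α*t)*Real.log (1-l))
        (nhdsWithin (0:ℝ) (Set.Ioi 0)) (nhds 0) := by
      have T : Tendsto (fun t : ℝ => l*((α*t)*Real.log (α*t)) - l*(α*t) - (1-l)*Real.log (1-l)*(α*t))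
          (nhdsWithin (0:ℝ) (Set.Ioi 0)) (nhds (l*0 - l*0 - (1-l)*Real.log (1-l)*0)) :=
        ((hmullog.const_mul l).sub (hA.const_mul l)).sub (hA.const_mul ((1-l)*Real.log (1-l)))
      have e : (fun t : ℝ => l*((α*t)*Real.log (α*t)) - l*(α*t) - (1-l)*Real.log (1-l)*(α*t))
          = fun t : ℝ => l*(α*t)*(Real.log (α*t) - 1) - (1-l)*(α*t)*Real.log (1-l) := by
        funext t; ring
      rw [e] at T
      simpa using T
    have hexp : Tendsto (fun t : ℝ => Real.exp (l*(α*t)*(Real.log (α*t) - 1) - (1-l)*(α*t)*Real.log (1-l)))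
        (nhdsWithin (0:ℝ) (Set.Ioi 0)) (nhds 1) := by
      have := (Real.continuous_exp.tendsto 0).comp hexparg
      simpa [Function.comp_def] using this
    have := ((hnum.div hden one_ne_zero).mul (tendsto_const_nhds (x := 1/(1-l)))).mul hexp
    simpa using this
  · -- limit at ∞
    have ev : C0 =ᶠ[atTop] fun t => Real.exp (-(Real.log (1-l))/2 + (bmu ((1-l)*(α*t)) - bmu (α*t))) := by
      filter_upwards [eventually_gt_atTop (0:ℝ)] with t ht using hC0 t ht
    rw [sqrt_inv_eq h1l]
    apply Tendsto.congr' ev.symm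
    have t2 : Tendsto (fun t : ℝ => α*t) atTop atTop :=
      Tendsto.const_mul_atTop hα tendsto_id
    have hb1 : Tendsto (fun t : ℝ => bmu ((1-l)*(α*t))) atTop (nhds 0) := by
      apply bmu_tendsto.comp
      have : Tendsto (fun t : ℝ => ((1-l)*α)*t) atTop atTop :=
        Tendsto.const_mul_atTop (by positivity) tendsto_id
      convert this using 2 with t
      ring
    have hb2 : Tendsto (fun t : ℝ => bmu (α*t)) atTop (nhds 0) := bmu_tendsto.comp t2
    have : Tendsto (fun t : ℝ => -(Real.log (1-l))/2 + (bmu ((1-l)*(α*t)) - bmu (α*t)))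
        atTop (nhds (-(Real.log (1-l))/2 + (0 - 0))) :=
      tendsto_const_nhds.add (hb1.sub hb2)
    simpa [Function.comp_def] using (Real.continuous_exp.tendsto _).comp this
  · -- bounds
    intro t ht
    have hs0 : 0 < α*t := by positivity
    have hu0 : 0 < (1-l)*(α*t) := by positivity
    have hus : (1-l)*(α*t) ≤ α*t := by nlinarith
    rw [hC0 t ht]
    constructor
    · rw [sqrt_inv_eq h1l]
      apply Real.exp_le_exp.mpr
      have := bmu_anti hu0 hus
      linarith
    · have hnu := bmu_nu hu0 hus
      have e : Real.log ((1-l)*(α*t)) = Real.log (1-l) + Real.log (α*t) :=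
        Real.log_mul h1l.ne' hs0.ne'
      have h2 : -(Real.log (1-l))/2 + (bmu ((1-l)*(α*t)) - bmu (α*t)) ≤ -Real.log (1-l) := by
        rw [e] at hnu
        linarith
      calc Real.exp (-(Real.log (1-l))/2 + (bmu ((1-l)*(α*t)) - bmu (α*t)))
          ≤ Real.exp (-Real.log (1-l)) := Real.exp_le_exp.mpr h2
        _ = 1/(1-l) := by rw [Real.exp_neg, Real.exp_log h1l, one_div]
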